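/- Let A be the (n+1)-dimensional commutative algebra with basis {e_0,…,e_n}, products e_0² = e_0 + e_n, e_0e_i = ½e_i (1 ≤ i ≤ n), all other products zero, over a field of characteristic ≠ 2. Then A is a Lie triple algebra satisfying the train equation x³ − (3/2)ω(x)x² + (1/2)ω(x)²x = 0, where ω is the algebra homomorphism with ω(e_0) = 1, ω(e_i) = 0 for i ≥ 1, and A is not a Jordan algebra. -/

import Mathlib

set_option maxHeartbeats 1000000 in
/-- The (n+1)-dimensional algebra with e_0² = e_0 + e_n, e_0e_i = ½e_i (1 ≤ i ≤ n)
and all other products zero is a Lie triple algebra satisfying the train equation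
x³ − (3/2)ω(x)x² + (1/2)ω(x)²x = 0 (ω the weight homomorphism with ω(e_0) = 1,
ω(e_i) = 0 for i ≥ 1), and it is not a Jordan algebra. -/
theorem pseudo_gametic_train_not_jordan {K A : Type*} [Field K]
    [NonUnitalNonAssocCommRing A] [Module K A] [SMulCommClass K A A] [IsScalarTower K A A]
    (h2 : (2 : K) ≠ 0) (n : ℕ) (hn : 1 ≤ n)
    (e : Module.Basis (Fin (n + 1)) K A)
    (h00 : e 0 * e 0 = e 0 + e ⟨n, Nat.lt_succ_self n⟩)
    (h0i : ∀ i : Fin (n + 1), 1 ≤ (i : ℕ) → e 0 * e i = (2 : K)⁻¹ • e i)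
    (hij : ∀ i j : Fin (n + 1), 1 ≤ (i : ℕ) → 1 ≤ (j : ℕ) → e i * e j = 0) :
    (∀ x y : A, 2 • (x * (x * (x * y))) + y * (x * (x * x)) = 3 • (x * (y * (x * x)))) ∧
    (∃ ω : A →ₗ[K] K, (∀ x y : A, ω (x * y) = ω x * ω y) ∧ ω (e 0) = 1 ∧
      (∀ i : Fin (n + 1), 1 ≤ (i : ℕ) → ω (e i) = 0) ∧
      ∀ x : A, x * (x * x) - ((3 : K) * (2 : K)⁻¹ * ω x) • (x * x)
        + ((2 : K)⁻¹ * (ω x * ω x)) • x = 0) ∧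
    ¬(∀ x y : A, (x * x) * (y * x) = ((x * x) * y) * x) := by
  set nn : Fin (n + 1) := ⟨n, Nat.lt_succ_self n⟩ with hnn
  have hnn0 : nn ≠ 0 := by
    intro h
    apply Nat.one_le_iff_ne_zero.mp hn
    simpa [hnn, Fin.ext_iff] using h
  set c : A →ₗ[K] K := e.coord 0 with hc
  set z : A := e nn with hz
  have hce : ∀ j : Fin (n + 1), c (e j) = if j = 0 then 1 else 0 := by
    intro j
    simp [hc, Module.Basis.coord_apply, Finsupp.single_apply, eq_comm]
  have hc0 : c (e 0) = 1 := by simp [hce]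
  have hcz : c z = 0 := by simp [hz, hce, hnn0]
  -- the key multiplication formula
  have hmul : ∀ x y : A, x * y =
      (c x * c y) • z + ((2 : K)⁻¹ * c x) • y + ((2 : K)⁻¹ * c y) • x := by
    have key : LinearMap.mul K A = LinearMap.mk₂ K
        (fun x y : A => (c x * c y) • z + ((2 : K)⁻¹ * c x) • y + ((2 : K)⁻¹ * c y) • x)
        (by intro x x' y; simp only [map_add, smul_eq_mul]; module)
        (by intro a x y; simp only [map_smul, smul_eq_mul]; module)
        (by intro x y y'; simp only [map_add, smul_eq_mul]; module)
        (by intro a x y; simp only [map_smul, smul_eq_mul]; module) := by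
      refine e.ext fun i => e.ext fun j => ?_
      rcases Nat.eq_zero_or_pos (i : ℕ) with hi | hi
      · have hi0 : i = 0 := Fin.ext hi
        rcases Nat.eq_zero_or_pos (j : ℕ) with hj | hj
        · have hj0 : j = 0 := Fin.ext hj
          subst hi0 hj0
          simp only [LinearMap.mul_apply', LinearMap.mk₂_apply, h00, hc0, one_mul, mul_one,
            one_smul]
          match_scalars <;> field_simp <;> norm_num
        · have hj0 : j ≠ 0 := by intro h; simp [h] at hj
          subst hi0
          simp [LinearMap.mul_apply', h0i j hj, hce, hj0]
      · have hi0 : i ≠ 0 := by intro h; simp [h] at hi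
        rcases Nat.eq_zero_or_pos (j : ℕ) with hj | hj
        · have hj0 : j = 0 := Fin.ext hj
          subst hj0
          have := h0i i hi
          rw [mul_comm] at this
          simp [LinearMap.mul_apply', this, hce, hi0]
        · have hj0 : j ≠ 0 := by intro h; simp [h] at hj
          simp [LinearMap.mul_apply', hij i j hi hj, hce, hi0, hj0]
    intro x y
    have := LinearMap.congr_fun (LinearMap.congr_fun key x) y
    simpa using this
  have hcmul : ∀ x y : A, c (x * y) = c x * c y := by
    intro x y
    rw [hmul x y]
    simp only [map_add, map_smul, hcz, smul_eq_mul, mul_zero, zero_add]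
    field_simp
    ring
  have h4 : (4 : K) ≠ 0 := by
    have : (4 : K) = 2 * 2 := by norm_num
    rw [this]; exact mul_ne_zero h2 h2
  have h8 : (8 : K) ≠ 0 := by
    have : (8 : K) = 2 * 4 := by norm_num
    rw [this]; exact mul_ne_zero h2 h4
  refine ⟨?_, ⟨c, hcmul, hc0, ?_, ?_⟩, ?_⟩
  · intro x y
    have Hxx : x * x = (c x * c x) • z + (c x) • x := by
      rw [hmul x x]
      match_scalars <;> field_simp <;> (first | ring1 | norm_num)
    have Hxy : x * y = (c x * c y) • z + ((2:K)⁻¹ * c x) • y + ((2:K)⁻¹ * c y) • x := hmul x y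
    have Hx3 : x * (x * x) = (3 * (2:K)⁻¹ * (c x * c x * c x)) • z + (c x * c x) • x := by
      rw [hmul x (x * x), hcmul x x, Hxx]
      match_scalars <;> field_simp <;> (first | ring1 | norm_num)
    have Hxxy : x * (x * y) = (3 * (2:K)⁻¹ * (c x * c x * c y)) • z
        + ((4:K)⁻¹ * (c x * c x)) • y + (3 * (4:K)⁻¹ * (c x * c y)) • x := by
      rw [hmul x (x * y), hcmul x y, Hxy]
      match_scalars <;> field_simp <;> (first | ring1 | norm_num)
    have hcxxy : c (x * (x * y)) = c x * (c x * c y) := by rw [hcmul, hcmul]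
    have Hxxxy : x * (x * (x * y)) = (7 * (4:K)⁻¹ * (c x * c x * c x * c y)) • z
        + ((8:K)⁻¹ * (c x * c x * c x)) • y + (7 * (8:K)⁻¹ * (c x * c x * c y)) • x := by
      rw [hmul x (x * (x * y)), hcxxy, Hxxy]
      match_scalars <;> field_simp <;> (first | ring1 | norm_num)
    have hcx3 : c (x * (x * x)) = c x * (c x * c x) := by rw [hcmul, hcmul]
    have Hyx3 : y * (x * (x * x)) = (7 * (4:K)⁻¹ * (c x * c x * c x * c y)) • z
        + ((2:K)⁻¹ * (c x * c x * c x)) • y + ((2:K)⁻¹ * (c x * c x * c y)) • x := by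
      rw [hmul y (x * (x * x)), hcx3, Hx3]
      match_scalars <;> field_simp <;> (first | ring1 | norm_num)
    have Hyxx : y * (x * x) = (3 * (2:K)⁻¹ * (c x * c x * c y)) • z
        + ((2:K)⁻¹ * (c x * c x)) • y + ((2:K)⁻¹ * (c x * c y)) • x := by
      rw [hmul y (x * x), hcmul x x, Hxx]
      match_scalars <;> field_simp <;> (first | ring1 | norm_num)
    have hcyxx : c (y * (x * x)) = c y * (c x * c x) := by rw [hcmul, hcmul]
    have Hxyxx : x * (y * (x * x)) = (7 * (4:K)⁻¹ * (c x * c x * c x * c y)) • z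
        + ((4:K)⁻¹ * (c x * c x * c x)) • y + (3 * (4:K)⁻¹ * (c x * c x * c y)) • x := by
      rw [hmul x (y * (x * x)), hcyxx, Hyxx]
      match_scalars <;> field_simp <;> (first | ring1 | norm_num)
    rw [Hxxxy, Hyx3, Hxyxx]
    match_scalars <;> field_simp <;> (first | ring1 | norm_num)
  · intro i hi
    have hi0 : i ≠ 0 := by intro h; simp [h] at hi
    simp [hce, hi0]
  · intro x
    have Hxx : x * x = (c x * c x) • z + (c x) • x := by
      rw [hmul x x]
      match_scalars <;> field_simp <;> (first | ring1 | norm_num)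
    have Hx3 : x * (x * x) = (3 * (2:K)⁻¹ * (c x * c x * c x)) • z + (c x * c x) • x := by
      rw [hmul x (x * x), hcmul x x, Hxx]
      match_scalars <;> field_simp <;> (first | ring1 | norm_num)
    rw [Hx3, Hxx]
    match_scalars <;> field_simp <;> (first | ring1 | norm_num)
  · intro h
    have heq := h (e 0) (e 0)
    rw [h00] at heq
    have hc0z : c (e 0 + z) = 1 := by
      simp only [map_add, hc0, hcz, add_zero]
    have H1 : (e 0 + z) * (e 0 + z) = e 0 + (2 : K) • z := by
      rw [hmul (e 0 + z) (e 0 + z), hc0z]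
      match_scalars <;> field_simp <;> (first | ring1 | norm_num)
    have H2 : (e 0 + z) * e 0 = e 0 + (3 * (2:K)⁻¹) • z := by
      rw [hmul (e 0 + z) (e 0), hc0z, hc0]
      match_scalars <;> field_simp <;> (first | ring1 | norm_num)
    have hc2 : c (e 0 + (3 * (2:K)⁻¹) • z) = 1 := by
      simp only [map_add, map_smul, hc0, hcz, smul_eq_mul, mul_zero, add_zero]
    have H3 : (e 0 + (3 * (2:K)⁻¹) • z) * e 0 = e 0 + (7 * (4:K)⁻¹) • z := by
      rw [hmul _ (e 0), hc2, hc0]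
      match_scalars <;> field_simp <;> (first | ring1 | norm_num)
    rw [H1, H2, H3] at heq
    have hkey := congrArg (e.coord nn) heq
    simp only [map_add, map_smul, hz, Module.Basis.coord_apply, Module.Basis.repr_self,
      Finsupp.single_apply, smul_eq_mul] at hkey
    rw [if_neg (Ne.symm hnn0)] at hkey
    simp only [mul_zero, zero_add, if_pos rfl, mul_one] at hkey
    field_simp at hkey
    have h10 : (1 : K) = 0 := by linear_combination hkey
    exact one_ne_zero h10
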